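/- (Exact identity behind Lemma 5.1) With notation as above (r = (a₁,a₂)(b₁,b₂)(c), (a₁,a₂)≠(0,0), ω = (τ,1)(u,-τu-(z,z)/2)(z), τ₂>0), setting w = -a₂τ₂·z₁ + (a₂τ₁-a₁)·z₂ + τ₂·c ∈ Λ⊗ℝ and A = ⟨ω,r⟩, one has the identity: ũ₂ = (-⟨r,r⟩τ₂² + (w,w) + 2A₁a₂τ₂² - 2A₂a₂τ₁τ₂ + 2A₂a₁τ₂)/(2τ₂|a₂τ-a₁|²), where ũ₂ = (2τ₂u₂+(z₂,z₂))/(2τ₂), A = A₁ + iA₂, τ = τ₁+iτ₂, z = z₁+iz₂. -/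

import Mathlib

open Complex

/-- The ℂ-bilinear extension of the form on `Λ` (given by the real matrix `G`)
to `Λ ⊗ ℂ ≅ ℂ¹⁶`. -/
noncomputable def pairC (G : Matrix (Fin 16) (Fin 16) ℝ) (x y : Fin 16 → ℂ) : ℂ :=
  ∑ i : Fin 16, ∑ j : Fin 16, (G i j : ℂ) * x i * y j

/-- The real form on `Λ ⊗ ℝ ≅ ℝ¹⁶` given by `G`. -/
noncomputable def pairR (G : Matrix (Fin 16) (Fin 16) ℝ) (x y : Fin 16 → ℝ) : ℝ :=
  ∑ i : Fin 16, ∑ j : Fin 16, G i j * x i * y j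

/-- The ℂ-bilinear pairing on `L ⊗ ℂ` where `L = H ⊕ H ⊕ Λ`: an element
`(a₁,a₂)(b₁,b₂)(c)` denotes `a₁x₁+a₂x₂+b₁y₁+b₂y₂+c`, and
`⟨(a₁,a₂)(b₁,b₂)(c),(a₁',a₂')(b₁',b₂')(c')⟩ = a₁b₁'+a₂b₂'+b₁a₁'+b₂a₂'+(c,c')`. -/
noncomputable def pairL (G : Matrix (Fin 16) (Fin 16) ℝ)
    (a₁ a₂ b₁ b₂ : ℂ) (c : Fin 16 → ℂ)
    (a₁' a₂' b₁' b₂' : ℂ) (c' : Fin 16 → ℂ) : ℂ :=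
  a₁ * b₁' + a₂ * b₂' + b₁ * a₁' + b₂ * a₂' + pairC G c c'

lemma pairC_re (G : Matrix (Fin 16) (Fin 16) ℝ) (x y : Fin 16 → ℂ) :
    (pairC G x y).re = pairR G (fun i => (x i).re) (fun i => (y i).re)
      - pairR G (fun i => (x i).im) (fun i => (y i).im) := by
  simp only [pairC, pairR, Complex.re_sum, Complex.mul_re, Complex.mul_im,
    Complex.ofReal_re, Complex.ofReal_im, ← Finset.sum_sub_distrib]
  congr 1; ext i; congr 1; ext j; ring

lemma pairC_im (G : Matrix (Fin 16) (Fin 16) ℝ) (x y : Fin 16 → ℂ) :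
    (pairC G x y).im = pairR G (fun i => (x i).re) (fun i => (y i).im)
      + pairR G (fun i => (x i).im) (fun i => (y i).re) := by
  simp only [pairC, pairR, Complex.im_sum, Complex.mul_re, Complex.mul_im,
    Complex.ofReal_re, Complex.ofReal_im, ← Finset.sum_add_distrib]
  congr 1; ext i; congr 1; ext j; ring

lemma pairR_symm (G : Matrix (Fin 16) (Fin 16) ℝ) (hsym : ∀ i j, G i j = G j i)
    (x y : Fin 16 → ℝ) : pairR G x y = pairR G y x := by
  simp only [pairR]
  rw [Finset.sum_comm]
  congr 1; ext i; congr 1; ext j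
  rw [hsym j i]; ring

lemma pairR_comb (G : Matrix (Fin 16) (Fin 16) ℝ) (α β γ : ℝ) (x y w : Fin 16 → ℝ) :
    pairR G (fun i => α * x i + β * y i + γ * w i)
      (fun i => α * x i + β * y i + γ * w i)
    = α * α * pairR G x x + α * β * pairR G x y + α * γ * pairR G x w
    + β * α * pairR G y x + β * β * pairR G y y + β * γ * pairR G y w
    + γ * α * pairR G w x + γ * β * pairR G w y + γ * γ * pairR G w w := by
  simp only [pairR, Finset.mul_sum, ← Finset.sum_add_distrib]
  congr 1; ext i; congr 1; ext j; ring

/-- Exact identity behind Lemma 5.1: with `w = -a₂τ₂z₁ + (a₂τ₁-a₁)z₂ + τ₂c` and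
`A = ⟨ω,r⟩ = A₁ + iA₂`, one has
`ũ₂ = (-⟨r,r⟩τ₂² + (w,w) + 2A₁a₂τ₂² - 2A₂a₂τ₁τ₂ + 2A₂a₁τ₂)/(2τ₂|a₂τ-a₁|²)`. -/
theorem stmt14 (G : Matrix (Fin 16) (Fin 16) ℝ)
    (hsym : ∀ i j, G i j = G j i)
    (hneg : ∀ v : Fin 16 → ℝ, v ≠ 0 → pairR G v v < 0)
    (a₁ a₂ b₁ b₂ : ℤ) (c : Fin 16 → ℤ) (ha : ¬(a₁ = 0 ∧ a₂ = 0))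
    (τ u : ℂ) (z : Fin 16 → ℂ) (hτ : 0 < τ.im) :
    (2 * τ.im * u.im + pairR G (fun i => (z i).im) (fun i => (z i).im))
        / (2 * τ.im)
      = (-(2 * ((a₁ : ℝ) * b₁ + (a₂ : ℝ) * b₂)
              + pairR G (fun i => (c i : ℝ)) (fun i => (c i : ℝ))) * τ.im ^ 2
          + pairR G
              (fun i => -(a₂ : ℝ) * τ.im * (z i).re
                + ((a₂ : ℝ) * τ.re - (a₁ : ℝ)) * (z i).im + τ.im * (c i : ℝ))
              (fun i => -(a₂ : ℝ) * τ.im * (z i).re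
                + ((a₂ : ℝ) * τ.re - (a₁ : ℝ)) * (z i).im + τ.im * (c i : ℝ))
          + 2 * (pairL G τ 1 u (-τ * u - pairC G z z / 2) z
              (a₁ : ℂ) (a₂ : ℂ) (b₁ : ℂ) (b₂ : ℂ) (fun i => (c i : ℂ))).re
              * (a₂ : ℝ) * τ.im ^ 2
          - 2 * (pairL G τ 1 u (-τ * u - pairC G z z / 2) z
              (a₁ : ℂ) (a₂ : ℂ) (b₁ : ℂ) (b₂ : ℂ) (fun i => (c i : ℂ))).im
              * (a₂ : ℝ) * τ.re * τ.im
          + 2 * (pairL G τ 1 u (-τ * u - pairC G z z / 2) z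
              (a₁ : ℂ) (a₂ : ℂ) (b₁ : ℂ) (b₂ : ℂ) (fun i => (c i : ℂ))).im
              * (a₁ : ℝ) * τ.im)
        / (2 * τ.im * Complex.normSq ((a₂ : ℂ) * τ - (a₁ : ℂ))) := by
  have hτ0 : τ.im ≠ 0 := ne_of_gt hτ
  have hne : ((a₂ : ℂ) * τ - (a₁ : ℂ)) ≠ 0 := by
    intro h
    by_cases h2 : a₂ = 0
    · have h1 : a₁ = 0 := by
        have := h
        simp [h2, sub_eq_zero] at this
        exact_mod_cast this
      exact ha ⟨h1, h2⟩
    · have him := congrArg Complex.im h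
      simp [Complex.mul_im] at him
      rcases him with him | him
      · exact h2 (by exact_mod_cast him)
      · exact hτ0 him
  have hns : Complex.normSq ((a₂ : ℂ) * τ - (a₁ : ℂ)) ≠ 0 := by
    simpa using hne
  have hd1 : (2 : ℝ) * τ.im ≠ 0 := by positivity
  have hd2 : (2 : ℝ) * τ.im * Complex.normSq ((a₂ : ℂ) * τ - (a₁ : ℂ)) ≠ 0 :=
    mul_ne_zero hd1 hns
  -- abbreviations
  set zr : Fin 16 → ℝ := fun i => (z i).re with hzr
  set zi : Fin 16 → ℝ := fun i => (z i).im with hzi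
  set cr : Fin 16 → ℝ := fun i => ((c i : ℝ)) with hcr
  -- the pairL value
  have hA : pairL G τ 1 u (-τ * u - pairC G z z / 2) z
      (a₁ : ℂ) (a₂ : ℂ) (b₁ : ℂ) (b₂ : ℂ) (fun i => (c i : ℂ))
      = τ * b₁ + b₂ + u * a₁ + (-τ * u - pairC G z z / 2) * a₂
        + pairC G z (fun i => (c i : ℂ)) := by
    simp [pairL]
  have hcre : (fun i => ((c i : ℂ)).re) = cr := by
    funext i; simp [hcr]
  have hcim : (fun i => ((c i : ℂ)).im) = fun _ => (0:ℝ) := by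
    funext i; simp
  have hzero : ∀ x : Fin 16 → ℝ, pairR G x (fun _ => (0:ℝ)) = 0 := by
    intro x; simp [pairR]
  have hAre : (pairL G τ 1 u (-τ * u - pairC G z z / 2) z
      (a₁ : ℂ) (a₂ : ℂ) (b₁ : ℂ) (b₂ : ℂ) (fun i => (c i : ℂ))).re
      = τ.re * b₁ + b₂ + u.re * a₁
        + (-(τ.re * u.re - τ.im * u.im)
            - (pairR G zr zr - pairR G zi zi) / 2) * a₂
        + pairR G zr cr := by
    rw [hA]
    simp [Complex.add_re, Complex.mul_re, Complex.sub_re, Complex.neg_re,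
      Complex.div_re, pairC_re, pairC_im, hcre, hcim, hzero, Complex.normSq]
    rfl
  have hAim : (pairL G τ 1 u (-τ * u - pairC G z z / 2) z
      (a₁ : ℂ) (a₂ : ℂ) (b₁ : ℂ) (b₂ : ℂ) (fun i => (c i : ℂ))).im
      = τ.im * b₁ + u.im * a₁
        + (-(τ.re * u.im + τ.im * u.re)
            - (pairR G zr zi + pairR G zi zr) / 2) * a₂
        + pairR G zi cr := by
    rw [hA]
    simp [Complex.add_im, Complex.mul_im, Complex.sub_im, Complex.neg_im,
      Complex.div_im, pairC_re, pairC_im, hcre, hcim, hzero, Complex.normSq]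
    rfl
  have hw : pairR G
      (fun i => -(a₂ : ℝ) * τ.im * zr i + ((a₂ : ℝ) * τ.re - (a₁ : ℝ)) * zi i
        + τ.im * cr i)
      (fun i => -(a₂ : ℝ) * τ.im * zr i + ((a₂ : ℝ) * τ.re - (a₁ : ℝ)) * zi i
        + τ.im * cr i)
      = (-(a₂ : ℝ) * τ.im) * (-(a₂ : ℝ) * τ.im) * pairR G zr zr
      + (-(a₂ : ℝ) * τ.im) * ((a₂ : ℝ) * τ.re - (a₁ : ℝ)) * pairR G zr zi
      + (-(a₂ : ℝ) * τ.im) * τ.im * pairR G zr cr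
      + ((a₂ : ℝ) * τ.re - (a₁ : ℝ)) * (-(a₂ : ℝ) * τ.im) * pairR G zi zr
      + ((a₂ : ℝ) * τ.re - (a₁ : ℝ)) * ((a₂ : ℝ) * τ.re - (a₁ : ℝ)) * pairR G zi zi
      + ((a₂ : ℝ) * τ.re - (a₁ : ℝ)) * τ.im * pairR G zi cr
      + τ.im * (-(a₂ : ℝ) * τ.im) * pairR G cr zr
      + τ.im * ((a₂ : ℝ) * τ.re - (a₁ : ℝ)) * pairR G cr zi
      + τ.im * τ.im * pairR G cr cr :=
    pairR_comb G (-(a₂ : ℝ) * τ.im) ((a₂ : ℝ) * τ.re - (a₁ : ℝ)) τ.im zr zi cr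
  have hnsq : Complex.normSq ((a₂ : ℂ) * τ - (a₁ : ℂ))
      = ((a₂ : ℝ) * τ.re - (a₁ : ℝ)) * ((a₂ : ℝ) * τ.re - (a₁ : ℝ))
        + ((a₂ : ℝ) * τ.im) * ((a₂ : ℝ) * τ.im) := by
    simp [Complex.normSq_apply, Complex.sub_re, Complex.sub_im,
      Complex.mul_re, Complex.mul_im]
  have hs1 : pairR G zr zi = pairR G zi zr := pairR_symm G hsym zr zi
  have hs2 : pairR G cr zr = pairR G zr cr := pairR_symm G hsym cr zr
  have hs3 : pairR G cr zi = pairR G zi cr := pairR_symm G hsym cr zi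
  rw [hw, hAre, hAim, hs1, hs2, hs3, div_eq_div_iff hd1 hd2, hnsq]
  ring
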